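/- Let n ≥ 2 with n+1 odd. Suppose P(t,x,y) factors as the product of the four Kippenhahn polynomials F_{B⁺}·F_{B₁⁻}·F_{B⁻}·F_{B₁⁺}, where B₁± is the top-left (n/2)×(n/2) principal submatrix of the (n/2+1)×(n/2+1) matrix B±. Then the convex set determined by the largest roots of P(·, −cosθ, −sinθ) (over θ ∈ [0,2π)) equals conv(W(B⁺) ∪ W(B⁻)). -/

import Mathlib

open Matrix

/-- The numerical range of a complex matrix: the set of values `⟨A x, x⟩ = x* A x`
over unit vectors `x`. -/
def nr {ι : Type*} [Fintype ι] (M : Matrix ι ι ℂ) : Set ℂ :=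
  {z | ∃ x : ι → ℂ, ∑ i, ‖x i‖ ^ 2 = 1 ∧ z = star x ⬝ᵥ M.mulVec x}

/-- The Hermitian real part `(M + M*) / 2` of a complex matrix. -/
noncomputable def reM {ι : Type*} (M : Matrix ι ι ℂ) : Matrix ι ι ℂ :=
  (2⁻¹ : ℂ) • (M + Mᴴ)

/-- The Hermitian imaginary part `(M - M*) / (2i)` of a complex matrix. -/
noncomputable def imM {ι : Type*} (M : Matrix ι ι ℂ) : Matrix ι ι ℂ :=
  (2 * Complex.I)⁻¹ • (M - Mᴴ)

/-- The Kippenhahn polynomial `F_M(t,x,y) = det(t·I + x·Re(M) + y·Im(M))`. -/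
noncomputable def kip {k : ℕ} (M : Matrix (Fin k) (Fin k) ℂ) (t x y : ℝ) : ℂ :=
  ((t : ℂ) • (1 : Matrix (Fin k) (Fin k) ℂ) + (x : ℂ) • reM M + (y : ℂ) • imM M).det

/-- The principal submatrix obtained by deleting the last row and column. -/
def subm {k : ℕ} (M : Matrix (Fin (k + 1)) (Fin (k + 1)) ℂ) : Matrix (Fin k) (Fin k) ℂ :=
  Matrix.of fun i j => M i.castSucc j.castSucc

noncomputable def Hmat {k : ℕ} (M : Matrix (Fin k) (Fin k) ℂ) (θ : ℝ) : Matrix (Fin k) (Fin k) ℂ :=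
  ((Real.cos θ : ℂ)) • reM M + ((Real.sin θ : ℂ)) • imM M

lemma reM_herm {k : ℕ} (M : Matrix (Fin k) (Fin k) ℂ) : (reM M).IsHermitian := by
  unfold Matrix.IsHermitian reM
  rw [conjTranspose_smul, conjTranspose_add, conjTranspose_conjTranspose]
  simp [add_comm]

lemma imM_herm {k : ℕ} (M : Matrix (Fin k) (Fin k) ℂ) : (imM M).IsHermitian := by
  unfold Matrix.IsHermitian imM
  rw [conjTranspose_smul, conjTranspose_sub, conjTranspose_conjTranspose]
  have h1 : (star ((2 * Complex.I)⁻¹) : ℂ) = -(2 * Complex.I)⁻¹ := by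
    simp [Complex.ext_iff, Complex.inv_im, Complex.inv_re]
  rw [h1, neg_smul, ← smul_neg, neg_sub]

lemma Hmat_herm {k : ℕ} (M : Matrix (Fin k) (Fin k) ℂ) (θ : ℝ) : (Hmat M θ).IsHermitian := by
  unfold Matrix.IsHermitian Hmat
  rw [conjTranspose_add, conjTranspose_smul, conjTranspose_smul, reM_herm, imM_herm]
  simp only [RCLike.star_def, Complex.conj_ofReal]

lemma kip_eq {k : ℕ} (M : Matrix (Fin k) (Fin k) ℂ) (θ : ℝ) (t : ℝ) :
    kip M t (-Real.cos θ) (-Real.sin θ) = ((t : ℂ) • (1 : Matrix (Fin k) (Fin k) ℂ) - Hmat M θ).det := by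
  unfold kip Hmat
  congr 1
  push_cast
  module

lemma det_smul_one_sub {k : ℕ} {A : Matrix (Fin k) (Fin k) ℂ} (hA : A.IsHermitian) (s : ℝ) :
    ((s : ℂ) • (1 : Matrix (Fin k) (Fin k) ℂ) - A).det = ∏ i, ((s : ℂ) - (hA.eigenvalues i : ℂ)) := by
  set U := (hA.eigenvectorUnitary : Matrix (Fin k) (Fin k) ℂ) with hU
  have hUU : U * star U = 1 := (Matrix.mem_unitaryGroup_iff).mp hA.eigenvectorUnitary.2
  have key : (s : ℂ) • (1 : Matrix (Fin k) (Fin k) ℂ) - A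
      = U * ((s : ℂ) • 1 - diagonal (RCLike.ofReal ∘ hA.eigenvalues)) * star U := by
    conv_lhs => rw [hA.spectral_theorem, Unitary.conjStarAlgAut_apply]
    rw [Matrix.mul_sub, Matrix.sub_mul, ← hU]
    congr 1
    rw [Matrix.mul_smul, mul_one, Matrix.smul_mul, hUU]
  rw [key, Matrix.det_mul_right_comm, hUU, one_mul]
  have hdiag : (s : ℂ) • (1 : Matrix (Fin k) (Fin k) ℂ) - diagonal (RCLike.ofReal ∘ hA.eigenvalues)
      = diagonal (fun i => (s : ℂ) - (hA.eigenvalues i : ℂ)) := by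
    rw [Matrix.smul_one_eq_diagonal, diagonal_sub]
    rfl
  rw [hdiag, det_diagonal]

lemma conj_mul_self (z : ℂ) : star z * z = ((‖z‖ ^ 2 : ℝ) : ℂ) := by
  rw [show (star z) = (starRingEnd ℂ) z from rfl, mul_comm, Complex.mul_conj,
    Complex.normSq_eq_norm_sq]

lemma star_dot_self {k : ℕ} (x : Fin k → ℂ) :
    star x ⬝ᵥ x = ((∑ i, ‖x i‖ ^ 2 : ℝ) : ℂ) := by
  push_cast
  simp only [dotProduct, Pi.star_apply]
  exact Finset.sum_congr rfl fun i _ => RCLike.conj_mul (x i)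

-- L1

lemma quad_reM {k : ℕ} (M : Matrix (Fin k) (Fin k) ℂ) (x : Fin k → ℂ) :
    star x ⬝ᵥ (reM M) *ᵥ x = (((star x ⬝ᵥ M *ᵥ x).re : ℝ) : ℂ) := by
  have hconj : star x ⬝ᵥ Mᴴ *ᵥ x = (starRingEnd ℂ) (star x ⬝ᵥ M *ᵥ x) := by
    have h1 : star (star x ⬝ᵥ (M *ᵥ x)) = star (M *ᵥ x) ⬝ᵥ x := by
      rw [star_dotProduct, star_star]
    have h2 : star (M *ᵥ x) ⬝ᵥ x = star x ⬝ᵥ Mᴴ *ᵥ x := by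
      rw [star_mulVec, ← dotProduct_mulVec]
    rw [← h2, ← h1]; rfl
  rw [reM, smul_mulVec, add_mulVec, dotProduct_smul, dotProduct_add, hconj]
  rw [Complex.add_conj]
  simp [smul_eq_mul]


-- L1'

lemma quad_imM {k : ℕ} (M : Matrix (Fin k) (Fin k) ℂ) (x : Fin k → ℂ) :
    star x ⬝ᵥ (imM M) *ᵥ x = (((star x ⬝ᵥ M *ᵥ x).im : ℝ) : ℂ) := by
  have hconj : star x ⬝ᵥ Mᴴ *ᵥ x = (starRingEnd ℂ) (star x ⬝ᵥ M *ᵥ x) := by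
    have h1 : star (star x ⬝ᵥ (M *ᵥ x)) = star (M *ᵥ x) ⬝ᵥ x := by
      rw [star_dotProduct, star_star]
    have h2 : star (M *ᵥ x) ⬝ᵥ x = star x ⬝ᵥ Mᴴ *ᵥ x := by
      rw [star_mulVec, ← dotProduct_mulVec]
    rw [← h2, ← h1]; rfl
  rw [imM, smul_mulVec, sub_mulVec, dotProduct_smul, dotProduct_sub, hconj]
  rw [Complex.sub_conj]
  field_simp [smul_eq_mul, Complex.I_ne_zero]
  rw [smul_eq_mul, div_mul_eq_mul_div, one_mul, mul_comm Complex.I, mul_div_mul_right _ _ Complex.I_ne_zero]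
  push_cast
  ring

lemma kip_root {k : ℕ} (M : Matrix (Fin k) (Fin k) ℂ) (θ : ℝ) (s : ℝ) :
    kip M s (-Real.cos θ) (-Real.sin θ) = 0 ↔ ∃ i, (Hmat_herm M θ).eigenvalues i = s := by
  rw [kip_eq, det_smul_one_sub (Hmat_herm M θ), Finset.prod_eq_zero_iff]
  constructor
  · rintro ⟨i, -, hi⟩
    exact ⟨i, by exact_mod_cast (sub_eq_zero.mp hi).symm⟩
  · rintro ⟨i, hi⟩
    exact ⟨i, Finset.mem_univ i, by rw [hi]; ring⟩

lemma exists_unit_quad {k : ℕ} {A : Matrix (Fin k) (Fin k) ℂ} (hA : A.IsHermitian) (i : Fin k) :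
    ∃ x : Fin k → ℂ, (∑ j, ‖x j‖ ^ 2 = 1) ∧ star x ⬝ᵥ A *ᵥ x = (hA.eigenvalues i : ℂ) := by
  set v : Fin k → ℂ := ⇑(hA.eigenvectorBasis i) with hv
  have hnorm : ∑ j, ‖v j‖ ^ 2 = 1 := by
    have h1 : ‖(hA.eigenvectorBasis i : EuclideanSpace ℂ (Fin k))‖ = 1 :=
      hA.eigenvectorBasis.orthonormal.1 i
    rw [EuclideanSpace.norm_eq] at h1
    have h2 : (0:ℝ) ≤ ∑ j, ‖(hA.eigenvectorBasis i : EuclideanSpace ℂ (Fin k)) j‖ ^ 2 :=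
      Finset.sum_nonneg fun j _ => sq_nonneg _
    have := Real.sqrt_eq_one.mp h1
    simpa [hv] using this
  refine ⟨v, hnorm, ?_⟩
  rw [hv, hA.mulVec_eigenvectorBasis]
  have hsmul : (hA.eigenvalues i • ⇑(hA.eigenvectorBasis i) : Fin k → ℂ)
      = fun j => (hA.eigenvalues i : ℂ) * (hA.eigenvectorBasis i) j := by
    funext j
    simp [Complex.real_smul]
  rw [hsmul]
  have : star ⇑(hA.eigenvectorBasis i) ⬝ᵥ (fun j => (hA.eigenvalues i : ℂ) * (hA.eigenvectorBasis i) j)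
      = (hA.eigenvalues i : ℂ) * (star ⇑(hA.eigenvectorBasis i) ⬝ᵥ ⇑(hA.eigenvectorBasis i)) := by
    simp [dotProduct, Finset.mul_sum]
    exact Finset.sum_congr rfl fun j _ => by ring
  rw [this, star_dot_self, show (∑ j, ‖(hA.eigenvectorBasis i).ofLp j‖ ^ 2 : ℝ) = 1 from hnorm]
  simp

lemma quad_re_le {k : ℕ} {A : Matrix (Fin k) (Fin k) ℂ} (hA : A.IsHermitian)
    {x : Fin k → ℂ} (hx : ∑ i, ‖x i‖ ^ 2 = 1) :
    ∃ i, (star x ⬝ᵥ A *ᵥ x).re ≤ hA.eigenvalues i := by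
  have hne : Nonempty (Fin k) := by
    rcases Nat.eq_zero_or_pos k with h | h
    · subst h; simp at hx
    · exact ⟨⟨0, h⟩⟩
  set U := (hA.eigenvectorUnitary : Matrix (Fin k) (Fin k) ℂ) with hUdef
  have hUU : U * star U = 1 := (Matrix.mem_unitaryGroup_iff).mp hA.eigenvectorUnitary.2
  set y : Fin k → ℂ := star U *ᵥ x with hy
  have hystar : star y = star x ᵥ* U := by
    rw [hy, star_mulVec, Matrix.star_eq_conjTranspose, conjTranspose_conjTranspose]
  have hq : star x ⬝ᵥ A *ᵥ x = ∑ i, (hA.eigenvalues i : ℂ) * (star (y i) * y i) := by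
    conv_lhs => rw [hA.spectral_theorem, Unitary.conjStarAlgAut_apply]
    rw [← hUdef, ← Matrix.mulVec_mulVec, ← Matrix.mulVec_mulVec, dotProduct_mulVec, ← hystar]
    rw [← hy]
    simp only [dotProduct, Matrix.mulVec_diagonal, Pi.star_apply, Function.comp_apply]
    exact Finset.sum_congr rfl fun i _ => mul_left_comm _ _ _
  have hsum : ∑ i, ‖y i‖ ^ 2 = 1 := by
    have h1 : star y ⬝ᵥ y = star x ⬝ᵥ x := by
      rw [hystar, hy, ← dotProduct_mulVec, Matrix.mulVec_mulVec, hUU, Matrix.one_mulVec]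
    rw [star_dot_self, star_dot_self, hx] at h1
    exact_mod_cast h1
  obtain ⟨i0, -, hmax⟩ := Finset.exists_max_image Finset.univ hA.eigenvalues Finset.univ_nonempty
  refine ⟨i0, ?_⟩
  have hre : (star x ⬝ᵥ A *ᵥ x).re = ∑ i, hA.eigenvalues i * ‖y i‖ ^ 2 := by
    rw [hq]
    have : ∀ i : Fin k, (hA.eigenvalues i : ℂ) * (star (y i) * y i)
        = ((hA.eigenvalues i * ‖y i‖ ^ 2 : ℝ) : ℂ) := by
      intro i
      rw [conj_mul_self, ← Complex.ofReal_mul]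
    rw [Finset.sum_congr rfl fun i _ => this i, ← Complex.ofReal_sum]
    exact Complex.ofReal_re _
  rw [hre]
  calc ∑ i, hA.eigenvalues i * ‖y i‖ ^ 2
      ≤ ∑ i, hA.eigenvalues i0 * ‖y i‖ ^ 2 := by
        refine Finset.sum_le_sum fun i _ => ?_
        exact mul_le_mul_of_nonneg_right (hmax i (Finset.mem_univ i)) (sq_nonneg _)
    _ = hA.eigenvalues i0 := by rw [← Finset.mul_sum, hsum, mul_one]

lemma Hmat_subm {k : ℕ} (M : Matrix (Fin (k + 1)) (Fin (k + 1)) ℂ) (θ : ℝ) :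
    Hmat (subm M) θ = subm (Hmat M θ) := by
  ext i j
  simp [Hmat, reM, imM, subm, conjTranspose_apply]

lemma quad_snoc {k : ℕ} (A : Matrix (Fin (k + 1)) (Fin (k + 1)) ℂ) (x : Fin k → ℂ) :
    star (Fin.snoc x 0 : Fin (k + 1) → ℂ) ⬝ᵥ A *ᵥ (Fin.snoc x 0 : Fin (k + 1) → ℂ)
      = star x ⬝ᵥ (subm A) *ᵥ x := by
  simp only [dotProduct, Matrix.mulVec, Pi.star_apply, Fin.sum_univ_castSucc,
    Fin.snoc_castSucc, Fin.snoc_last, star_zero, zero_mul, mul_zero, add_zero, subm,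
    Matrix.of_apply, dotProduct]

lemma sum_norm_snoc {k : ℕ} (x : Fin k → ℂ) :
    ∑ i, ‖(Fin.snoc x 0 : Fin (k + 1) → ℂ) i‖ ^ 2 = ∑ i, ‖x i‖ ^ 2 := by
  simp [Fin.sum_univ_castSucc]

lemma exp_neg_re (θ : ℝ) (z : ℂ) :
    (Complex.exp (-(θ : ℂ) * Complex.I) * z).re = Real.cos θ * z.re + Real.sin θ * z.im := by
  rw [Complex.exp_mul_I]
  simp [Complex.cos_neg, Complex.sin_neg, add_mul, Complex.mul_re,
    Complex.cos_ofReal_re, Complex.cos_ofReal_im, Complex.sin_ofReal_re, Complex.sin_ofReal_im,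
    Complex.I_re, Complex.I_im]

lemma quad_Hmat {k : ℕ} (M : Matrix (Fin k) (Fin k) ℂ) (θ : ℝ) (x : Fin k → ℂ) :
    star x ⬝ᵥ (Hmat M θ) *ᵥ x
      = (((Complex.exp (-(θ : ℂ) * Complex.I) * (star x ⬝ᵥ M *ᵥ x)).re : ℝ) : ℂ) := by
  rw [Hmat, add_mulVec, smul_mulVec, smul_mulVec, dotProduct_add,
    dotProduct_smul, dotProduct_smul, quad_reM, quad_imM, exp_neg_re]
  push_cast
  simp [smul_eq_mul]

lemma nr_nonempty {k : ℕ} (M : Matrix (Fin (k + 1)) (Fin (k + 1)) ℂ) : (nr M).Nonempty := by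
  refine ⟨_, ⟨Pi.single 0 1, ?_, rfl⟩⟩
  rw [Fintype.sum_eq_single (0 : Fin (k + 1))]
  · simp
  · intro i hi
    simp [Pi.single_apply, hi]

lemma nr_compact {k : ℕ} (M : Matrix (Fin k) (Fin k) ℂ) : IsCompact (nr M) := by
  have himg : nr M = (fun x : Fin k → ℂ => star x ⬝ᵥ M *ᵥ x) ''
      {x : Fin k → ℂ | ∑ i, ‖x i‖ ^ 2 = 1} := by
    ext z
    simp only [nr, Set.mem_image, Set.mem_setOf_eq]
    exact ⟨fun ⟨x, h1, h2⟩ => ⟨x, h1, h2.symm⟩, fun ⟨x, h1, h2⟩ => ⟨x, h1, h2.symm⟩⟩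
  have hcont : Continuous fun x : Fin k → ℂ => star x ⬝ᵥ M *ᵥ x := by
    simp only [dotProduct, Matrix.mulVec, Pi.star_apply]
    refine continuous_finset_sum _ fun i _ => Continuous.mul ?_ ?_
    · exact (continuous_apply i).star
    · exact continuous_finset_sum _ fun j _ => continuous_const.mul (continuous_apply j)
  have hclosed : IsClosed {x : Fin k → ℂ | ∑ i, ‖x i‖ ^ 2 = 1} := by
    refine isClosed_eq ?_ continuous_const
    exact continuous_finset_sum _ fun i _ => ((continuous_apply i).norm.pow 2)
  have hbdd : Bornology.IsBounded {x : Fin k → ℂ | ∑ i, ‖x i‖ ^ 2 = 1} := by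
    refine (Metric.isBounded_closedBall (x := (0 : Fin k → ℂ)) (r := 1)).subset ?_
    intro x hx
    simp only [Set.mem_setOf_eq] at hx
    rw [Metric.mem_closedBall, dist_zero_right]
    refine (pi_norm_le_iff_of_nonneg zero_le_one).mpr fun i => ?_
    have h1 : ‖x i‖ ^ 2 ≤ 1 := by
      rw [← hx]
      exact Finset.single_le_sum (fun j _ => sq_nonneg ‖x j‖) (Finset.mem_univ i)
    nlinarith [norm_nonneg (x i)]
  rw [himg]
  exact (Metric.isCompact_of_isClosed_isBounded hclosed hbdd).image hcont

lemma isCompact_convexHull_cplx {s : Set ℂ} (hne : s.Nonempty) (hs : IsCompact s) :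
    IsCompact (convexHull ℝ s) := by
  obtain ⟨p₀, hp₀⟩ := hne
  have himg : convexHull ℝ s = (fun q : (Fin 3 → ℝ) × (Fin 3 → ℂ) => ∑ i, q.1 i • q.2 i) ''
      ((stdSimplex ℝ (Fin 3)) ×ˢ (Set.univ.pi fun _ : Fin 3 => s)) := by
    apply Set.Subset.antisymm
    · intro z hz
      obtain ⟨ι, hfin, p, w, hps, hai, hw0, hw1, hwp⟩ :=
        eq_pos_convex_span_of_mem_convexHull hz
      have hcard : Fintype.card ι ≤ 3 := by
        have h1 := hai.card_le_finrank_succ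
        have h2 : Module.finrank ℝ (vectorSpan ℝ (Set.range p)) ≤ 2 := by
          simpa [Complex.finrank_real_complex] using Submodule.finrank_le (vectorSpan ℝ (Set.range p))
        omega
      obtain ⟨e⟩ : Nonempty (ι ↪ Fin 3) := by
        rw [Function.Embedding.nonempty_iff_card_le]
        simpa using hcard
      classical
      set w' : Fin 3 → ℝ := fun j => if h : ∃ i, e i = j then w h.choose else 0 with hw'
      set p' : Fin 3 → ℂ := fun j => if h : ∃ i, e i = j then p h.choose else p₀ with hp'
      have hchoose : ∀ i : ι, (show ∃ i', e i' = e i from ⟨i, rfl⟩).choose = i := fun i =>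
        e.injective (show ∃ i', e i' = e i from ⟨i, rfl⟩).choose_spec
      have hsubset : (Finset.univ.map e : Finset (Fin 3)) ⊆ Finset.univ := Finset.subset_univ _
      have hzero : ∀ j ∈ Finset.univ, j ∉ Finset.univ.map e → w' j • p' j = 0 := by
        intro j _ hj
        have : ¬ ∃ i, e i = j := by
          simpa [Finset.mem_map] using hj
        simp [hw', this]
      have hzero' : ∀ j ∈ Finset.univ, j ∉ Finset.univ.map e → w' j = 0 := by
        intro j _ hj
        have : ¬ ∃ i, e i = j := by
          simpa [Finset.mem_map] using hj
        simp [hw', this]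
      have hsum_w : ∑ j, w' j = 1 := by
        rw [← Finset.sum_subset hsubset hzero', Finset.sum_map]
        rw [← hw1]
        refine Finset.sum_congr rfl fun i _ => ?_
        simp only [hw', Function.Embedding.coeFn_mk, dif_pos (⟨i, rfl⟩ : ∃ i', e i' = e i)]
        rw [hchoose i]
      have hsum_p : ∑ j, w' j • p' j = z := by
        rw [← Finset.sum_subset hsubset hzero, Finset.sum_map]
        rw [← hwp]
        refine Finset.sum_congr rfl fun i _ => ?_
        simp only [hw', hp', Function.Embedding.coeFn_mk, dif_pos (⟨i, rfl⟩ : ∃ i', e i' = e i)]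
        rw [hchoose i]
      refine ⟨(w', p'), ⟨⟨fun j => ?_, hsum_w⟩, fun j _ => ?_⟩, hsum_p⟩
      · by_cases h : ∃ i, e i = j
        · simp only [hw', dif_pos h]
          exact (hw0 _).le
        · simp [hw', h]
      · by_cases h : ∃ i, e i = j
        · simp only [hp', dif_pos h]
          exact hps ⟨h.choose, rfl⟩
        · simp [hp', h, hp₀]
    · rintro z ⟨⟨w, p⟩, ⟨⟨hw0, hw1⟩, hp⟩, rfl⟩
      exact (convex_convexHull ℝ s).sum_mem (fun i _ => hw0 i) hw1
        (fun i _ => subset_convexHull ℝ s (hp i (Set.mem_univ i)))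
  rw [himg]
  refine IsCompact.image ?_ ?_
  · exact (isCompact_stdSimplex _ _).prod (isCompact_univ_pi fun _ => hs)
  · refine continuous_finset_sum _ fun i _ => Continuous.fun_smul ?_ ?_
    · exact (continuous_apply i).comp continuous_fst
    · exact (continuous_apply i).comp continuous_snd

/-- If `P(t,x,y)` factors as the product of the four Kippenhahn polynomials
`F_{B⁺}·F_{B₁⁻}·F_{B⁻}·F_{B₁⁺}`, where `B₁±` is the principal submatrix of `B±` obtained
by deleting the last row and column, then the convex set determined by the largest roots
of `P(·, -cos θ, -sin θ)` over `θ ∈ [0, 2π)` equals `conv(W(B⁺) ∪ W(B⁻))`. -/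
theorem stmt_18 (m : ℕ) (hm : 1 ≤ m)
    (Bp Bm : Matrix (Fin (m + 1)) (Fin (m + 1)) ℂ)
    (P : ℝ → ℝ → ℝ → ℂ)
    (hP : ∀ t x y : ℝ, P t x y =
      kip Bp t x y * kip (subm Bm) t x y * kip Bm t x y * kip (subm Bp) t x y) :
    {z : ℂ | ∀ θ ∈ Set.Ico (0 : ℝ) (2 * Real.pi),
        (Complex.exp (-(θ : ℂ) * Complex.I) * z).re ≤
          sSup {s : ℝ | P s (-Real.cos θ) (-Real.sin θ) = 0}} =
      convexHull ℝ (nr Bp ∪ nr Bm) := by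
  have hmne : Nonempty (Fin m) := ⟨⟨0, hm⟩⟩
  have key : ∀ θ : ℝ,
      (∀ w ∈ nr Bp ∪ nr Bm, (Complex.exp (-(θ : ℂ) * Complex.I) * w).re ≤
        sSup {s : ℝ | P s (-Real.cos θ) (-Real.sin θ) = 0}) ∧
      (∃ w ∈ nr Bp ∪ nr Bm, sSup {s : ℝ | P s (-Real.cos θ) (-Real.sin θ) = 0} =
        (Complex.exp (-(θ : ℂ) * Complex.I) * w).re) := by
    intro θ
    set S : Set ℝ := {s : ℝ | P s (-Real.cos θ) (-Real.sin θ) = 0} with hS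
    have hSiff : ∀ s : ℝ, s ∈ S ↔
        ((∃ i, (Hmat_herm Bp θ).eigenvalues i = s) ∨
         (∃ i, (Hmat_herm (subm Bm) θ).eigenvalues i = s) ∨
         (∃ i, (Hmat_herm Bm θ).eigenvalues i = s) ∨
         (∃ i, (Hmat_herm (subm Bp) θ).eigenvalues i = s)) := by
      intro s
      rw [hS]
      simp only [Set.mem_setOf_eq, hP, mul_eq_zero]
      rw [kip_root, kip_root, kip_root, kip_root]
      tauto
    have hSeq : S = Set.range (Hmat_herm Bp θ).eigenvalues
        ∪ Set.range (Hmat_herm (subm Bm) θ).eigenvalues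
        ∪ Set.range (Hmat_herm Bm θ).eigenvalues
        ∪ Set.range (Hmat_herm (subm Bp) θ).eigenvalues := by
      ext s
      rw [hSiff s]
      simp only [Set.mem_union, Set.mem_range]
      tauto
    have hfin : S.Finite := by
      rw [hSeq]
      exact (((Set.finite_range _).union (Set.finite_range _)).union
        (Set.finite_range _)).union (Set.finite_range _)
    have hSne : S.Nonempty :=
      ⟨(Hmat_herm Bp θ).eigenvalues 0, (hSiff _).mpr (Or.inl ⟨0, rfl⟩)⟩
    have hub : ∀ s ∈ S, s ≤ sSup S := fun s hs => le_csSup hfin.bddAbove hs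
    constructor
    · have step : ∀ M : Matrix (Fin (m + 1)) (Fin (m + 1)) ℂ,
          (∀ s : ℝ, (∃ i, (Hmat_herm M θ).eigenvalues i = s) → s ∈ S) →
          ∀ w ∈ nr M, (Complex.exp (-(θ : ℂ) * Complex.I) * w).re ≤ sSup S := by
        intro M hMS w hw
        obtain ⟨x, hx1, hx2⟩ := hw
        obtain ⟨i, hi⟩ := quad_re_le (Hmat_herm M θ) hx1
        have h1 : (Complex.exp (-(θ : ℂ) * Complex.I) * w).re
            = (star x ⬝ᵥ (Hmat M θ) *ᵥ x).re := by
          rw [quad_Hmat, Complex.ofReal_re, hx2]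
        rw [h1]
        exact hi.trans (hub _ (hMS _ ⟨i, rfl⟩))
      rintro w (hw | hw)
      · exact step Bp (fun s hs => (hSiff s).mpr (Or.inl hs)) w hw
      · exact step Bm (fun s hs => (hSiff s).mpr (Or.inr (Or.inr (Or.inl hs)))) w hw
    · have hmem := Set.Nonempty.csSup_mem hSne hfin
      have full_case : ∀ M : Matrix (Fin (m + 1)) (Fin (m + 1)) ℂ, nr M ⊆ nr Bp ∪ nr Bm →
          (∃ i, (Hmat_herm M θ).eigenvalues i = sSup S) →
          ∃ w ∈ nr Bp ∪ nr Bm, sSup S = (Complex.exp (-(θ : ℂ) * Complex.I) * w).re := by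
        rintro M hsub ⟨i, hi⟩
        obtain ⟨x, hx1, hx2⟩ := exists_unit_quad (Hmat_herm M θ) i
        refine ⟨star x ⬝ᵥ M *ᵥ x, hsub ⟨x, hx1, rfl⟩, ?_⟩
        have heq : (((Hmat_herm M θ).eigenvalues i : ℝ) : ℂ)
            = (((Complex.exp (-(θ : ℂ) * Complex.I) * (star x ⬝ᵥ M *ᵥ x)).re : ℝ) : ℂ) := by
          rw [← hx2, quad_Hmat]
        rw [← hi]
        exact_mod_cast heq
      have sub_case : ∀ M : Matrix (Fin (m + 1)) (Fin (m + 1)) ℂ, nr M ⊆ nr Bp ∪ nr Bm →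
          (∃ i, (Hmat_herm (subm M) θ).eigenvalues i = sSup S) →
          ∃ w ∈ nr Bp ∪ nr Bm, sSup S = (Complex.exp (-(θ : ℂ) * Complex.I) * w).re := by
        rintro M hsub ⟨i, hi⟩
        obtain ⟨x, hx1, hx2⟩ := exists_unit_quad (Hmat_herm (subm M) θ) i
        set x' : Fin (m + 1) → ℂ := Fin.snoc x 0 with hx'
        have hx1' : ∑ j, ‖x' j‖ ^ 2 = 1 := by rw [hx', sum_norm_snoc]; exact hx1
        have hq : star x' ⬝ᵥ (Hmat M θ) *ᵥ x' = ((Hmat_herm (subm M) θ).eigenvalues i : ℂ) := by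
          rw [hx', quad_snoc, ← Hmat_subm]
          exact hx2
        refine ⟨star x' ⬝ᵥ M *ᵥ x', hsub ⟨x', hx1', rfl⟩, ?_⟩
        have heq : (((Hmat_herm (subm M) θ).eigenvalues i : ℝ) : ℂ)
            = (((Complex.exp (-(θ : ℂ) * Complex.I) * (star x' ⬝ᵥ M *ᵥ x')).re : ℝ) : ℂ) := by
          rw [← hq, quad_Hmat]
        rw [← hi]
        exact_mod_cast heq
      rcases (hSiff _).mp hmem with h | h | h | h
      · exact full_case Bp Set.subset_union_left h
      · exact sub_case Bm Set.subset_union_right h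
      · exact full_case Bm Set.subset_union_right h
      · exact sub_case Bp Set.subset_union_left h
  apply Set.Subset.antisymm
  · intro z hz
    by_contra hzK
    have hKconv : Convex ℝ (convexHull ℝ (nr Bp ∪ nr Bm)) := convex_convexHull ℝ _
    have hKcl : IsClosed (convexHull ℝ (nr Bp ∪ nr Bm)) :=
      (isCompact_convexHull_cplx ((nr_nonempty Bp).inl)
        ((nr_compact Bp).union (nr_compact Bm))).isClosed
    obtain ⟨f, u, hfa, hfz⟩ := geometric_hahn_banach_closed_point hKconv hKcl hzK
    have f_eq : ∀ w : ℂ, f w = w.re * f 1 + w.im * f Complex.I := by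
      intro w
      have hw : w = w.re • (1 : ℂ) + w.im • Complex.I := by
        simp only [Complex.real_smul, mul_one]
        exact (Complex.re_add_im w).symm
      conv_lhs => rw [hw]
      rw [map_add, _root_.map_smul, _root_.map_smul, smul_eq_mul, smul_eq_mul]
    set c : ℂ := ⟨f 1, f Complex.I⟩ with hc
    by_cases hc0 : c = 0
    · have h1 : f 1 = 0 := by
        have := congrArg Complex.re hc0
        simpa [hc] using this
      have h2 : f Complex.I = 0 := by
        have := congrArg Complex.im hc0
        simpa [hc] using this
      have hz0 : ∀ w, f w = 0 := fun w => by rw [f_eq, h1, h2]; ring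
      obtain ⟨w₀, hw₀⟩ := nr_nonempty Bp
      have hlt := hfa w₀ (subset_convexHull ℝ _ (Or.inl hw₀))
      rw [hz0 w₀] at hlt
      rw [hz0 z] at hfz
      linarith
    · set r := ‖c‖ with hrdef
      have hr : 0 < r := norm_pos_iff.mpr hc0
      set θ := if 0 ≤ c.arg then c.arg else c.arg + 2 * Real.pi with hθdef
      have hθmem : θ ∈ Set.Ico (0 : ℝ) (2 * Real.pi) := by
        have h1 := Complex.arg_le_pi c
        have h2 := Complex.neg_pi_lt_arg c
        have hπ := Real.pi_pos
        rw [hθdef]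
        split_ifs with h
        · exact ⟨h, by linarith⟩
        · push_neg at h
          exact ⟨by linarith, by linarith⟩
      have hcos : Real.cos θ = c.re / r := by
        rw [hθdef]
        split_ifs
        · exact Complex.cos_arg hc0
        · rw [Real.cos_add_two_pi]
          exact Complex.cos_arg hc0
      have hsin : Real.sin θ = c.im / r := by
        rw [hθdef]
        split_ifs
        · exact Complex.sin_arg c
        · rw [Real.sin_add_two_pi]
          exact Complex.sin_arg c
      have hre1 : c.re = f 1 := rfl
      have him1 : c.im = f Complex.I := rfl
      have hid : ∀ w : ℂ, f w = r * (Complex.exp (-(θ : ℂ) * Complex.I) * w).re := by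
        intro w
        rw [exp_neg_re, hcos, hsin, f_eq, ← hre1, ← him1]
        field_simp
      obtain ⟨w₀, hw₀mem, hw₀eq⟩ := (key θ).2
      have h1 : f z ≤ f w₀ := by
        rw [hid, hid]
        refine mul_le_mul_of_nonneg_left ?_ hr.le
        rw [← hw₀eq]
        exact hz θ hθmem
      have h2 : f w₀ < u := hfa w₀ (subset_convexHull ℝ _ hw₀mem)
      linarith
  · intro z hz θ hθ
    have hhalf : Convex ℝ {w : ℂ | (Complex.exp (-(θ : ℂ) * Complex.I) * w).re ≤
        sSup {s : ℝ | P s (-Real.cos θ) (-Real.sin θ) = 0}} := by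
      intro a ha b hb sa sb hsa hsb hsab
      simp only [Set.mem_setOf_eq] at ha hb ⊢
      have hexp : Complex.exp (-(θ : ℂ) * Complex.I) * (sa • a + sb • b)
          = (sa : ℂ) * (Complex.exp (-(θ : ℂ) * Complex.I) * a)
            + (sb : ℂ) * (Complex.exp (-(θ : ℂ) * Complex.I) * b) := by
        simp only [Complex.real_smul]
        ring
      rw [hexp, Complex.add_re]
      have hra : ((sa : ℂ) * (Complex.exp (-(θ : ℂ) * Complex.I) * a)).re
          = sa * (Complex.exp (-(θ : ℂ) * Complex.I) * a).re := by
        simp [Complex.mul_re]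
      have hrb : ((sb : ℂ) * (Complex.exp (-(θ : ℂ) * Complex.I) * b)).re
          = sb * (Complex.exp (-(θ : ℂ) * Complex.I) * b).re := by
        simp [Complex.mul_re]
      rw [hra, hrb]
      calc sa * (Complex.exp (-(θ : ℂ) * Complex.I) * a).re
            + sb * (Complex.exp (-(θ : ℂ) * Complex.I) * b).re
          ≤ sa * sSup {s : ℝ | P s (-Real.cos θ) (-Real.sin θ) = 0}
            + sb * sSup {s : ℝ | P s (-Real.cos θ) (-Real.sin θ) = 0} :=
            add_le_add (mul_le_mul_of_nonneg_left ha hsa) (mul_le_mul_of_nonneg_left hb hsb)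
        _ = sSup {s : ℝ | P s (-Real.cos θ) (-Real.sin θ) = 0} := by
            rw [← add_mul, hsab, one_mul]
    exact convexHull_min (key θ).1 hhalf hz
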